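/- Let n, t, t′ be integers with n/2 ≥ t > t′ ≥ 0. Let p be a homogeneous multilinear polynomial of degree t and q a homogeneous multilinear polynomial of degree t′ in x_1,…,x_n, with Σ_{i=1}^n ∂p/∂x_i = 0 and Σ_{i=1}^n ∂q/∂x_i = 0. Then the symmetrization of their product vanishes identically on the hypercube: for every x ∈ {0,1}^n, Σ_{σ ∈ S_n} p(σx)·q(σx) = 0, where (σx)_i = x_{σ(i)}. -/

import Mathlib

open MvPolynomial

/-- The space `L_s` of homogeneous multilinear degree-`s` polynomials in `n`
variables, i.e. the span of the monomials `x^S = Π_{i∈S} x_i` with `|S| = s`. -/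
noncomputable def homogML (n s : ℕ) : Submodule ℝ (MvPolynomial (Fin n) ℝ) :=
  Submodule.span ℝ
    {p | ∃ S : Finset (Fin n), S.card = s ∧ p = ∏ i ∈ S, X i}

/-- The operator `W p = Σ_i ∂p/∂x_i`. -/
noncomputable def Wop (n : ℕ) :
    MvPolynomial (Fin n) ℝ →ₗ[ℝ] MvPolynomial (Fin n) ℝ :=
  ∑ i : Fin n, (pderiv i).toLinearMap

open Finset

variable {n : ℕ}

noncomputable def mexp (S : Finset (Fin n)) : Fin n →₀ ℕ := ∑ i ∈ S, Finsupp.single i 1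

lemma mexp_apply (S : Finset (Fin n)) (j : Fin n) : mexp S j = if j ∈ S then 1 else 0 := by
  classical
  simp only [mexp, Finsupp.finset_sum_apply, Finsupp.single_apply]
  simp [Finset.sum_ite_eq' S j (fun _ => 1)]

lemma mexp_inj {S T : Finset (Fin n)} (h : mexp S = mexp T) : S = T := by
  ext j
  have := congrArg (fun f => f j) h
  simp only [mexp_apply] at this
  by_cases hS : j ∈ S <;> by_cases hT : j ∈ T <;> simp_all

lemma prodX_eq (S : Finset (Fin n)) : (∏ i ∈ S, X i : MvPolynomial (Fin n) ℝ) = monomial (mexp S) 1 := by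
  classical
  induction S using Finset.induction with
  | empty => simp [mexp]
  | insert _ _ hx ih =>
    rename_i a s
    rw [Finset.prod_insert hx, ih]
    have : mexp (insert a s) = Finsupp.single a 1 + mexp s := by
      rw [mexp, mexp, Finset.sum_insert hx]
    rw [this, X, monomial_mul, one_mul]

lemma coeff_prodX (S T : Finset (Fin n)) :
    coeff (mexp T) (∏ i ∈ S, X i : MvPolynomial (Fin n) ℝ) = if S = T then 1 else 0 := by
  rw [prodX_eq, coeff_monomial]
  by_cases h : S = T
  · simp [h]
  · rw [if_neg h, if_neg (fun hh => h (mexp_inj hh))]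

lemma homogML_repr {s : ℕ} {p : MvPolynomial (Fin n) ℝ} (hp : p ∈ homogML n s) :
    p = ∑ S ∈ Finset.univ.powersetCard s,
        coeff (mexp S) p • (∏ i ∈ S, X i : MvPolynomial (Fin n) ℝ) := by
  classical
  let Φ : MvPolynomial (Fin n) ℝ →ₗ[ℝ] MvPolynomial (Fin n) ℝ :=
    { toFun := fun r => ∑ S ∈ Finset.univ.powersetCard s, coeff (mexp S) r • ∏ i ∈ S, X i
      map_add' := by
        intro a b
        simp [coeff_add, add_smul, Finset.sum_add_distrib]
      map_smul' := by
        intro c a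
        simp [coeff_smul, smul_smul, Finset.smul_sum] }
  have key : homogML n s ≤ LinearMap.eqLocus Φ LinearMap.id := by
    rw [homogML, Submodule.span_le]
    rintro r ⟨T, hT, rfl⟩
    have hTmem : T ∈ Finset.univ.powersetCard s := by
      simp [Finset.mem_powersetCard, hT]
    show Φ _ = _
    simp only [Φ, LinearMap.coe_mk, AddHom.coe_mk, LinearMap.id_coe, id_eq]
    rw [Finset.sum_congr rfl (fun S _ => by rw [coeff_prodX T S])]
    rw [Finset.sum_eq_single_of_mem T hTmem (fun S _ hS => by rw [if_neg (fun h => hS h.symm), zero_smul])]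
    simp
  have := key hp
  simpa [eq_comm, Φ] using this.symm

lemma pderiv_prodX (i : Fin n) (S : Finset (Fin n)) :
    pderiv i (∏ j ∈ S, X j : MvPolynomial (Fin n) ℝ)
      = if i ∈ S then (∏ j ∈ S.erase i, X j : MvPolynomial (Fin n) ℝ) else 0 := by
  classical
  rw [prodX_eq, pderiv_monomial]
  by_cases h : i ∈ S
  · have hm : mexp S = Finsupp.single i 1 + mexp (S.erase i) :=
      (Finset.add_sum_erase S (fun j => Finsupp.single j 1) h).symm
    rw [if_pos h, prodX_eq, hm]
    have h1 : (Finsupp.single i 1 + mexp (S.erase i) : Fin n →₀ ℕ) i = 1 := by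
      rw [Finsupp.add_apply, Finsupp.single_apply, mexp_apply]
      simp
    rw [h1, add_tsub_cancel_left]
    norm_num
  · rw [if_neg h]
    have h0 : mexp S i = 0 := by simp [mexp_apply, h]
    rw [h0]
    simp

lemma kernel_coeff {t : ℕ} {p : MvPolynomial (Fin n) ℝ} (hp : p ∈ homogML n t)
    (hpk : Wop n p = 0) (R : Finset (Fin n)) (hR : R.card + 1 = t) :
    ∑ i ∈ Rᶜ, coeff (mexp (insert i R)) p = 0 := by
  classical
  have hrepr := homogML_repr hp
  have h0 : ∀ i : Fin n, coeff (mexp R) (pderiv i p)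
      = (if i ∈ Rᶜ then coeff (mexp (insert i R)) p else 0) := by
    intro i
    conv_lhs => rw [hrepr]
    rw [map_sum, MvPolynomial.coeff_sum]
    have hterm : ∀ S ∈ Finset.univ.powersetCard t,
        coeff (mexp R) (pderiv i (coeff (mexp S) p • ∏ j ∈ S, X j))
          = coeff (mexp S) p * (if i ∈ S then (if S.erase i = R then (1:ℝ) else 0) else 0) := by
      intro S _
      rw [Derivation.map_smul, coeff_smul, pderiv_prodX, apply_ite (coeff (mexp R)),
        coeff_prodX, coeff_zero, smul_eq_mul]
    rw [Finset.sum_congr rfl hterm]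
    by_cases hiR : i ∈ R
    · rw [if_neg (by simp [hiR])]
      refine Finset.sum_eq_zero (fun S _ => ?_)
      by_cases hiS : i ∈ S
      · rw [if_pos hiS, if_neg, mul_zero]
        intro hE
        exact (Finset.notMem_erase i S) (hE ▸ hiR)
      · rw [if_neg hiS, mul_zero]
    · rw [if_pos (Finset.mem_compl.2 hiR)]
      have hmem : insert i R ∈ Finset.univ.powersetCard t := by
        simp [Finset.mem_powersetCard, Finset.card_insert_of_notMem hiR, hR]
      rw [Finset.sum_eq_single_of_mem (insert i R) hmem]
      · rw [if_pos (Finset.mem_insert_self i R), if_pos (Finset.erase_insert hiR), mul_one]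
      · intro S _ hS
        by_cases hiS : i ∈ S
        · rw [if_pos hiS, if_neg, mul_zero]
          intro hE
          exact hS (by rw [← hE, Finset.insert_erase hiS])
        · rw [if_neg hiS, mul_zero]
  have hWc : coeff (mexp R) (Wop n p) = 0 := by rw [hpk, coeff_zero]
  rw [Wop, LinearMap.sum_apply, MvPolynomial.coeff_sum] at hWc
  simp only [Derivation.coeFn_coe] at hWc
  rw [Finset.sum_congr rfl (fun i _ => h0 i), Finset.sum_ite_mem, Finset.univ_inter] at hWc
  exact hWc

lemma kernel_sum {t : ℕ} {p : MvPolynomial (Fin n) ℝ} (hp : p ∈ homogML n t)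
    (hpk : Wop n p = 0) {U : Finset (Fin n)} (hU : U.card < t) :
    ∑ S ∈ (Finset.univ.powersetCard t).filter (fun S => U ⊆ S), coeff (mexp S) p = 0 := by
  classical
  set A := (Finset.univ.powersetCard (t-1)).filter (fun R => U ⊆ R) with hA
  set B := (Finset.univ.powersetCard t).filter (fun S => U ⊆ S) with hB
  have h1 : ∑ R ∈ A, ∑ i ∈ Rᶜ, coeff (mexp (insert i R)) p = 0 := by
    refine Finset.sum_eq_zero (fun R hR => ?_)
    rw [hA, Finset.mem_filter, Finset.mem_powersetCard] at hR
    exact kernel_coeff hp hpk R (by omega)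
  have h2 : ∑ R ∈ A, ∑ i ∈ Rᶜ, coeff (mexp (insert i R)) p
      = ∑ S ∈ B, ∑ i ∈ S \ U, coeff (mexp S) p := by
    rw [Finset.sum_sigma', Finset.sum_sigma']
    refine Finset.sum_nbij' (fun x => ⟨insert x.2 x.1, x.2⟩)
      (fun x => ⟨x.1.erase x.2, x.2⟩) ?_ ?_ ?_ ?_ ?_
    · rintro ⟨R, i⟩ hx
      rw [Finset.mem_sigma, Finset.mem_filter, Finset.mem_powersetCard] at hx
      obtain ⟨⟨⟨-, hcard⟩, hUR⟩, hi⟩ := hx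
      rw [Finset.mem_compl] at hi
      rw [Finset.mem_sigma, Finset.mem_filter, Finset.mem_powersetCard]
      refine ⟨⟨⟨Finset.subset_univ _, ?_⟩, hUR.trans (Finset.subset_insert _ _)⟩, ?_⟩
      · rw [Finset.card_insert_of_notMem hi, hcard]; omega
      · rw [Finset.mem_sdiff]
        exact ⟨Finset.mem_insert_self _ _, fun h => hi (hUR h)⟩
    · rintro ⟨S, i⟩ hx
      rw [Finset.mem_sigma, Finset.mem_filter, Finset.mem_powersetCard] at hx
      obtain ⟨⟨⟨-, hcard⟩, hUS⟩, hi⟩ := hx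
      rw [Finset.mem_sdiff] at hi
      rw [Finset.mem_sigma, Finset.mem_filter, Finset.mem_powersetCard]
      refine ⟨⟨⟨Finset.subset_univ _, ?_⟩, ?_⟩, ?_⟩
      · rw [Finset.card_erase_of_mem hi.1, hcard]
      · intro u hu
        rw [Finset.mem_erase]
        exact ⟨fun h => hi.2 (h ▸ hu), hUS hu⟩
      · simp
    · rintro ⟨R, i⟩ hx
      rw [Finset.mem_sigma, Finset.mem_compl] at hx
      simp [Finset.erase_insert hx.2]
    · rintro ⟨S, i⟩ hx
      rw [Finset.mem_sigma, Finset.mem_sdiff] at hx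
      simp [Finset.insert_erase hx.2.1]
    · rintro ⟨R, i⟩ _
      rfl
  have h3 : ∑ S ∈ B, ∑ i ∈ S \ U, coeff (mexp S) p
      = ((t - U.card : ℕ) : ℝ) * ∑ S ∈ B, coeff (mexp S) p := by
    rw [Finset.mul_sum]
    refine Finset.sum_congr rfl (fun S hS => ?_)
    rw [hB, Finset.mem_filter, Finset.mem_powersetCard] at hS
    rw [Finset.sum_const, Finset.card_sdiff_of_subset hS.2, hS.1.2, nsmul_eq_mul]
  rw [h2, h3] at h1
  have : ((t - U.card : ℕ) : ℝ) ≠ 0 := by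
    have : 0 < t - U.card := by omega
    positivity
  exact (mul_eq_zero.mp h1).resolve_left this

lemma exists_perm_iff {U V : Finset (Fin n)} (h : U.card = V.card) :
    ∃ τ : Equiv.Perm (Fin n), ∀ i, τ i ∈ V ↔ i ∈ U := by
  classical
  have h1 : Fintype.card {x // x ∈ U} = Fintype.card {x // x ∈ V} := by
    simp [Fintype.card_coe, h]
  have h2 : Fintype.card {x // ¬ x ∈ U} = Fintype.card {x // ¬ x ∈ V} := by
    rw [Fintype.card_subtype_compl, Fintype.card_subtype_compl]
    simp [Fintype.card_coe, h]
  let ep : {x // x ∈ U} ≃ {x // x ∈ V} := Fintype.equivOfCardEq h1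
  let en : {x // ¬ x ∈ U} ≃ {x // ¬ x ∈ V} := Fintype.equivOfCardEq h2
  refine ⟨Equiv.subtypeCongr ep en, fun i => ?_⟩
  by_cases hi : i ∈ U
  · have : Equiv.subtypeCongr ep en i = (ep ⟨i, hi⟩ : Fin n) := by
      simp [Equiv.subtypeCongr, hi]
    rw [this]
    exact iff_of_true (ep ⟨i, hi⟩).2 hi
  · have : Equiv.subtypeCongr ep en i = (en ⟨i, hi⟩ : Fin n) := by
      simp [Equiv.subtypeCongr, hi]
    rw [this]
    exact iff_of_false (en ⟨i, hi⟩).2 hi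

lemma perm_sum_congr (x : Fin n → ℝ) {U V : Finset (Fin n)} (h : U.card = V.card) :
    ∑ σ : Equiv.Perm (Fin n), ∏ i ∈ U, x (σ i)
      = ∑ σ : Equiv.Perm (Fin n), ∏ i ∈ V, x (σ i) := by
  classical
  obtain ⟨τ, hτ⟩ := exists_perm_iff h
  have key : ∀ σ : Equiv.Perm (Fin n), ∏ i ∈ U, x ((σ * τ) i) = ∏ j ∈ V, x (σ j) := by
    intro σ
    exact Finset.prod_equiv τ (fun i => ((hτ i)).symm) (fun i _ => rfl)
  calc ∑ σ : Equiv.Perm (Fin n), ∏ i ∈ U, x (σ i)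
      = ∑ σ : Equiv.Perm (Fin n), ∏ i ∈ U, x ((σ * τ) i) :=
        (Equiv.sum_comp (Equiv.mulRight τ) (fun σ => ∏ i ∈ U, x (σ i))).symm
    _ = ∑ σ : Equiv.Perm (Fin n), ∏ j ∈ V, x (σ j) := by
        exact Finset.sum_congr rfl (fun σ _ => key σ)

lemma card_canon {m : ℕ} (h : m ≤ n) :
    (Finset.univ.filter (fun i : Fin n => (i : ℕ) < m)).card = m := by
  have : (Finset.univ.filter (fun i : Fin n => (i : ℕ) < m))
      = Finset.map (Fin.castLEEmb h) Finset.univ := by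
    ext j
    simp only [Finset.mem_filter, Finset.mem_univ, true_and, Finset.mem_map]
    constructor
    · intro hj
      exact ⟨⟨(j : ℕ), hj⟩, rfl⟩
    · rintro ⟨k, rfl⟩
      exact k.2
  rw [this, Finset.card_map, Finset.card_univ, Fintype.card_fin]

lemma mobius_subset (ψ : Finset (Fin n) → ℝ) (W : Finset (Fin n)) :
    ∑ U ∈ W.powerset, ∑ V ∈ U.powerset, (-1 : ℝ)^((U \ V).card) * ψ V = ψ W := by
  classical
  rw [Finset.sum_comm' (t' := W.powerset)
    (s' := fun V => W.powerset.filter (fun U => V ⊆ U)) ?_]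
  · have inner : ∀ V ∈ W.powerset,
        ∑ U ∈ W.powerset.filter (fun U => V ⊆ U), (-1 : ℝ)^((U \ V).card)
          = if V = W then 1 else 0 := by
      intro V hV
      rw [Finset.mem_powerset] at hV
      have : ∑ U ∈ W.powerset.filter (fun U => V ⊆ U), (-1 : ℝ)^((U \ V).card)
          = ∑ D ∈ (W \ V).powerset, (-1 : ℝ)^(D.card) := by
        refine Finset.sum_nbij' (fun U => U \ V) (fun D => V ∪ D) ?_ ?_ ?_ ?_ ?_
        · intro U hU
          rw [Finset.mem_filter, Finset.mem_powerset] at hU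
          rw [Finset.mem_powerset]
          exact Finset.sdiff_subset_sdiff hU.1 le_rfl
        · intro D hD
          rw [Finset.mem_powerset] at hD
          rw [Finset.mem_filter, Finset.mem_powerset]
          exact ⟨Finset.union_subset hV (hD.trans (Finset.sdiff_subset)),
            Finset.subset_union_left⟩
        · intro U hU
          rw [Finset.mem_filter] at hU
          exact Finset.union_sdiff_of_subset hU.2
        · intro D hD
          rw [Finset.mem_powerset] at hD
          exact Finset.union_sdiff_cancel_left (Finset.disjoint_sdiff.mono_right hD)
        · intro U _
          rfl
      rw [this]
      have := Finset.sum_powerset_neg_one_pow_card (x := W \ V)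
      have hcast : ∑ D ∈ (W \ V).powerset, (-1 : ℝ)^(D.card)
          = ((∑ D ∈ (W \ V).powerset, (-1 : ℤ)^(D.card) : ℤ) : ℝ) := by
        push_cast
        rfl
      rw [hcast, this]
      by_cases hVW : V = W
      · simp [hVW]
      · rw [if_neg ?_, if_neg hVW]
        · simp
        · intro hemp
          exact hVW (Finset.Subset.antisymm hV (by
            intro w hw
            by_contra hwV
            exact absurd (Finset.mem_sdiff.2 ⟨hw, hwV⟩) (by simp [hemp])))
    have step1 : ∑ V ∈ W.powerset, ∑ U ∈ W.powerset.filter (fun U => V ⊆ U),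
        (-1 : ℝ)^((U \ V).card) * ψ V
          = ∑ V ∈ W.powerset, (if V = W then (1:ℝ) else 0) * ψ V :=
      Finset.sum_congr rfl (fun V hV => by rw [← Finset.sum_mul, inner V hV])
    rw [step1, Finset.sum_eq_single_of_mem W (Finset.mem_powerset_self W)
      (fun V _ hne => by rw [if_neg hne, zero_mul]), if_pos rfl, one_mul]
  · intro U V
    simp only [Finset.mem_powerset, Finset.mem_filter]
    constructor
    · rintro ⟨hUW, hVU⟩
      exact ⟨⟨hUW, hVU⟩, hVU.trans hUW⟩
    · rintro ⟨⟨hUW, hVU⟩, -⟩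
      exact ⟨hUW, hVU⟩

/-- For `p ∈ Ker(W_t)` and `q ∈ Ker(W_t')` with `n/2 ≥ t > t'`, the
symmetrization of `pq` vanishes identically on the hypercube. -/
theorem sym_product_different_kernels (n t t' : ℕ) (ht : 2 * t ≤ n) (htt' : t' < t)
    (p q : MvPolynomial (Fin n) ℝ)
    (hp : p ∈ homogML n t) (hq : q ∈ homogML n t')
    (hpk : Wop n p = 0) (hqk : Wop n q = 0) :
    ∀ x : Fin n → ℝ, (∀ i, x i = 0 ∨ x i = 1) →
      ∑ σ : Equiv.Perm (Fin n), eval (x ∘ σ) p * eval (x ∘ σ) q = 0 := by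
  classical
  intro x hx
  set a : Finset (Fin n) → ℝ := fun S => coeff (mexp S) p with ha
  set b : Finset (Fin n) → ℝ := fun S => coeff (mexp S) q with hb
  have hevalp : ∀ σ : Equiv.Perm (Fin n),
      eval (x ∘ σ) p = ∑ S ∈ Finset.univ.powersetCard t, a S * ∏ i ∈ S, x (σ i) := by
    intro σ
    conv_lhs => rw [homogML_repr hp]
    rw [map_sum]
    refine Finset.sum_congr rfl fun S _ => ?_
    rw [smul_eval, map_prod]
    simp only [eval_X]
    rfl
  have hevalq : ∀ σ : Equiv.Perm (Fin n),
      eval (x ∘ σ) q = ∑ T ∈ Finset.univ.powersetCard t', b T * ∏ i ∈ T, x (σ i) := by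
    intro σ
    conv_lhs => rw [homogML_repr hq]
    rw [map_sum]
    refine Finset.sum_congr rfl fun T _ => ?_
    rw [smul_eval, map_prod]
    simp only [eval_X]
    rfl
  have hprodU : ∀ (σ : Equiv.Perm (Fin n)) (S T : Finset (Fin n)),
      (∏ i ∈ S, x (σ i)) * ∏ i ∈ T, x (σ i) = ∏ i ∈ S ∪ T, x (σ i) := by
    intro σ S T
    by_cases hall : ∀ i ∈ S ∩ T, x (σ i) = 1
    · rw [← Finset.prod_union_inter, Finset.prod_eq_one hall, mul_one]
    · push_neg at hall
      obtain ⟨i, hiST, hi1⟩ := hall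
      have hi0 : x (σ i) = 0 := (hx (σ i)).resolve_right hi1
      rw [Finset.prod_eq_zero (Finset.mem_of_mem_inter_left hiST) hi0,
        Finset.prod_eq_zero (Finset.mem_union_left T (Finset.mem_of_mem_inter_left hiST)) hi0,
        zero_mul]
  -- the symmetrized product counting function
  set N : Finset (Fin n) → ℝ := fun W => ∑ σ : Equiv.Perm (Fin n), ∏ i ∈ W, x (σ i) with hNdef
  set ψ : Finset (Fin n) → ℝ := fun W =>
    N (Finset.univ.filter (fun i : Fin n => (i : ℕ) < t + t' - W.card)) with hψdef
  set c : Finset (Fin n) → ℝ :=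
    fun U => ∑ V ∈ U.powerset, (-1 : ℝ)^((U \ V).card) * ψ V with hcdef
  have hN : ∀ S ∈ Finset.univ.powersetCard t, ∀ T ∈ Finset.univ.powersetCard t',
      N (S ∪ T) = ψ (S ∩ T) := by
    intro S hS T hT
    rw [Finset.mem_powersetCard] at hS hT
    have hcards : (S ∪ T).card + (S ∩ T).card = t + t' := by
      rw [Finset.card_union_add_card_inter, hS.2, hT.2]
    have hle : t + t' - (S ∩ T).card ≤ n := by
      have h' := (S ∪ T).card_le_univ
      rw [Fintype.card_fin] at h'
      omega
    exact perm_sum_congr x (by rw [card_canon hle]; omega)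
  have h1 : ∀ σ : Equiv.Perm (Fin n), eval (x ∘ σ) p * eval (x ∘ σ) q
      = ∑ S ∈ Finset.univ.powersetCard t, ∑ T ∈ Finset.univ.powersetCard t',
          a S * b T * ∏ i ∈ S ∪ T, x (σ i) := by
    intro σ
    rw [hevalp σ, hevalq σ, Finset.sum_mul_sum]
    refine Finset.sum_congr rfl fun S _ => Finset.sum_congr rfl fun T _ => ?_
    rw [mul_mul_mul_comm, hprodU σ S T]
  have h2 : ∑ σ : Equiv.Perm (Fin n), eval (x ∘ σ) p * eval (x ∘ σ) q
      = ∑ S ∈ Finset.univ.powersetCard t, ∑ T ∈ Finset.univ.powersetCard t',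
          a S * b T * N (S ∪ T) := by
    rw [Finset.sum_congr rfl (fun σ _ => h1 σ), Finset.sum_comm]
    refine Finset.sum_congr rfl fun S _ => ?_
    rw [Finset.sum_comm]
    refine Finset.sum_congr rfl fun T _ => ?_
    rw [← Finset.mul_sum]
  rw [h2]
  have h3 : ∀ S ∈ Finset.univ.powersetCard t, ∀ T ∈ Finset.univ.powersetCard t',
      N (S ∪ T) = ∑ U ∈ (Finset.univ : Finset (Fin n)).powerset,
        (if U ⊆ S ∧ U ⊆ T then c U else 0) := by
    intro S hS T hT
    rw [hN S hS T hT, ← mobius_subset ψ (S ∩ T), ← Finset.sum_filter]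
    refine Finset.sum_congr ?_ (fun _ _ => rfl)
    ext U
    rw [Finset.mem_powerset, Finset.mem_filter, Finset.mem_powerset, Finset.subset_inter_iff]
    exact ⟨fun h => ⟨Finset.subset_univ U, h⟩, fun h => h.2⟩
  rw [Finset.sum_congr rfl (fun S hS => Finset.sum_congr rfl (fun T hT => by
    rw [h3 S hS T hT, Finset.mul_sum]))]
  rw [Finset.sum_comm]
  rw [Finset.sum_congr rfl (fun S _ => Finset.sum_comm)]
  rw [Finset.sum_comm]
  refine Finset.sum_eq_zero fun U _ => ?_
  have hsplit : ∀ (T S : Finset (Fin n)),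
      a S * b T * (if U ⊆ S ∧ U ⊆ T then c U else 0)
        = (if U ⊆ T then b T else 0) * ((if U ⊆ S then a S else 0) * c U) := by
    intro T S
    by_cases h1' : U ⊆ S <;> by_cases h2' : U ⊆ T <;>
      simp [h1', h2'] <;> ring
  rw [Finset.sum_congr rfl (fun T _ => Finset.sum_congr rfl (fun S _ => hsplit T S))]
  rw [Finset.sum_congr rfl (fun T _ => by rw [← Finset.mul_sum, ← Finset.sum_mul]),
    ← Finset.sum_mul]
  by_cases hU : U.card < t
  · have hkp : ∑ S ∈ Finset.univ.powersetCard t, (if U ⊆ S then a S else 0) = 0 := by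
      rw [← Finset.sum_filter]
      exact kernel_sum hp hpk hU
    rw [hkp, zero_mul, mul_zero]
  · have hkq : ∑ T ∈ Finset.univ.powersetCard t', (if U ⊆ T then b T else 0) = 0 := by
      refine Finset.sum_eq_zero fun T hT => ?_
      rw [Finset.mem_powersetCard] at hT
      rw [if_neg]
      intro hUT
      have := Finset.card_le_card hUT
      omega
    rw [hkq, zero_mul]
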